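/- For every partial computable function f : ℕ → ℕ there exists a constant c_f such that α(α(f(n))) ≤ α(n) + c_f for all n in the domain of f, where α(n) = min{K(i) : i > n}. -/

import Mathlib

open Set Filter

namespace KC

/-- Length of the binary string identified with the natural number `n`. -/
def len (n : ℕ) : ℕ := Nat.log 2 (n + 1)

/-- Complexity of `x` relative to machine `T`. -/
noncomputable def MachineCplx (T : ℕ →. ℕ) (x : ℕ) : ℕ := sInf {n | ∃ y, len y = n ∧ x ∈ T y}

/-- `U` is an optimal machine. -/
def Optimal (U : ℕ →. ℕ) : Prop :=
  Partrec U ∧ ∀ T : ℕ →. ℕ, Partrec T → ∃ c, ∀ x y, x ∈ T y → MachineCplx U x ≤ len y + c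

/-- Conditional complexity of `x` given `y` relative to machine `T`. -/
noncomputable def CondCplx (T : ℕ →. ℕ) (x y : ℕ) : ℕ :=
  sInf {n | ∃ z, len z = n ∧ x ∈ T (Nat.pair z y)}

/-- `U` is optimal as a conditional machine. -/
def CondOptimal (U : ℕ →. ℕ) : Prop :=
  Partrec U ∧ ∀ T : ℕ →. ℕ, Partrec T →
    ∃ c, ∀ x y z, x ∈ T (Nat.pair z y) → CondCplx U x y ≤ len z + c

/-- `y` is a prefix of `z` (as binary strings identified with naturals). -/
def IsPrefix (y z : ℕ) : Prop := ∃ k, (y + 1) * 2 ^ k ≤ z + 1 ∧ z + 1 < (y + 2) * 2 ^ k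

/-- A machine with prefix-free domain. -/
def PrefixFree (T : ℕ →. ℕ) : Prop :=
  ∀ y z, (T y).Dom → (T z).Dom → IsPrefix y z → y = z

/-- `U` is an optimal prefix-free machine. -/
def PrefixOptimal (U : ℕ →. ℕ) : Prop :=
  Partrec U ∧ PrefixFree U ∧ ∀ T : ℕ →. ℕ, Partrec T → PrefixFree T →
    ∃ c, ∀ x y, x ∈ T y → MachineCplx U x ≤ len y + c

/-- Upper semicomputability: `A` is a pointwise limit of a computable
nonincreasing sequence of approximations. -/
def UpperSemicomputable (A : ℕ → ℕ) : Prop :=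
  ∃ F : ℕ → ℕ → ℕ, Computable₂ F ∧ (∀ x, Antitone (F x)) ∧ ∀ x, A x = ⨅ s, F x s

/-- Uniform upper semicomputability for a two-argument function. -/
def UpperSemicomputable₂ (B : ℕ → ℕ → ℕ) : Prop :=
  UpperSemicomputable (fun p => B (Nat.unpair p).1 (Nat.unpair p).2)

/-- Solovay's function `α` built from a complexity function `K`. -/
noncomputable def solovay (K : ℕ → ℕ) (n : ℕ) : ℕ := sInf {m | ∃ i, n < i ∧ K i = m}

/-- An order: total, non-decreasing, unbounded. -/
def IsOrder (h : ℕ → ℕ) : Prop := Monotone h ∧ ∀ m, ∃ n, m ≤ h n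

/-- Sub-linearity: `f n = o(n)`. -/
def Sublinear (f : ℕ → ℕ) : Prop :=
  Tendsto (fun n => (f n : ℝ) / n) atTop (nhds 0)

/-- `p_f = max {n | f n ≥ n}`. -/
noncomputable def pstar (f : ℕ → ℕ) : ℕ := sSup {n | n ≤ f n}

/-- The star-operator: `f* n = min {k | f^[k] n ≤ p_f}`. -/
noncomputable def starOp (f : ℕ → ℕ) (n : ℕ) : ℕ := sInf {k | f^[k] n ≤ pstar f}

end KC

open KC

private def enc' (n : ℕ) : ℕ := 2 ^ (n + 2) - 3

private lemma four_le_pow' (n : ℕ) : 4 ≤ 2 ^ (n + 2) := by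
  calc (4:ℕ) = 2 ^ 2 := by norm_num
  _ ≤ 2 ^ (n+2) := Nat.pow_le_pow_right (by norm_num) (by omega)

private lemma enc'_add_one (n : ℕ) : enc' n + 1 = 2 ^ (n + 2) - 2 := by
  have := four_le_pow' n; unfold enc'; omega

private lemma len_enc' (n : ℕ) : len (enc' n) = n + 1 := by
  have h4 := four_le_pow' n
  have h2 : (2:ℕ) ≤ 2 ^ (n+1) := by
    calc (2:ℕ) = 2^1 := rfl
    _ ≤ 2^(n+1) := Nat.pow_le_pow_right (by norm_num) (by omega)
  have hdouble : 2 ^ (n+2) = 2 * 2 ^ (n+1) := by ring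
  unfold len
  rw [enc'_add_one]
  exact Nat.log_eq_of_pow_le_of_lt_pow (by omega) (by omega)

private lemma enc'_inj : Function.Injective enc' := by
  intro a b h
  have := four_le_pow' a; have := four_le_pow' b
  have h2 : (2:ℕ) ^ (a+2) = 2 ^ (b+2) := by unfold enc' at h; omega
  have := Nat.pow_right_injective (le_refl 2) h2
  omega

private lemma prefix_enc' {a b : ℕ} (h : IsPrefix (enc' a) (enc' b)) : a = b := by
  obtain ⟨k, h1, h2⟩ := h
  rw [enc'_add_one, enc'_add_one] at *
  have ha2 : enc' a + 2 = 2 ^ (a+2) - 1 := by have := four_le_pow' a; unfold enc'; omega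
  rw [ha2] at h2
  have h4a := four_le_pow' a; have h4b := four_le_pow' b
  rcases Nat.eq_zero_or_pos k with hk | hk
  · subst hk
    simp at h1 h2
    have h2' : (2:ℕ) ^ (a+2) = 2 ^ (b+2) := by omega
    have := Nat.pow_right_injective (le_refl 2) h2'
    omega
  · exfalso
    have hz : 2 ≤ 2 ^ k := by
      calc (2:ℕ) = 2^1 := rfl
      _ ≤ 2^k := Nat.pow_le_pow_right (by norm_num) hk
    have hX : 2 ^ (a+2) * 2 ^ k = 2 ^ (a+2+k) := by rw [← pow_add]
    have h1' : 2 ^ (a+2+k) - 2 * 2 ^ k ≤ 2 ^ (b+2) - 2 := by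
      calc 2 ^ (a+2+k) - 2 * 2 ^ k = (2 ^ (a+2) - 2) * 2 ^ k := by rw [Nat.sub_mul, hX]
      _ ≤ 2 ^ (b+2) - 2 := h1
    have h2' : 2 ^ (b+2) - 2 < 2 ^ (a+2+k) - 2 ^ k := by
      calc 2 ^ (b+2) - 2 < (2 ^ (a+2) - 1) * 2 ^ k := h2
      _ = 2 ^ (a+2+k) - 2 ^ k := by rw [Nat.sub_mul, hX, one_mul]
    have hyX : 2 ^ (b+2) < 2 ^ (a+2+k) := by omega
    have hb2 : b + 2 < a + 2 + k := (Nat.pow_lt_pow_iff_right (by norm_num)).mp hyX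
    have hw1 : 2 ^ (b+2) ≤ 2 ^ (a+1+k) := Nat.pow_le_pow_right (by norm_num) (by omega)
    have hw2 : 2 * 2 ^ k ≤ 2 ^ (a+1+k) := by
      calc 2 * 2 ^ k = 2 ^ (k+1) := by ring
      _ ≤ 2 ^ (a+1+k) := Nat.pow_le_pow_right (by norm_num) (by omega)
    have hw3 : 2 ^ (a+2+k) = 2 * 2 ^ (a+1+k) := by ring
    omega

/-- The machine mapping `1^n 0` to `f n + 1`. -/
private def Wm (f : ℕ →. ℕ) : ℕ →. ℕ := fun z =>
  (Nat.rfind fun n => Part.some (decide (enc' n = z))).bind fun n => (f n).map Nat.succ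

private lemma mem_Wm {f : ℕ →. ℕ} {n m : ℕ} (h : m ∈ f n) : m + 1 ∈ Wm f (enc' n) := by
  refine Part.mem_bind_iff.mpr ⟨n, ?_, Part.mem_map Nat.succ h⟩
  refine Nat.mem_rfind.mpr ⟨?_, ?_⟩
  · simp [Part.mem_some_iff]
  · intro m' hm'
    rw [Part.mem_some_iff, eq_comm, decide_eq_false_iff_not]
    exact fun he => absurd (enc'_inj he) (Nat.ne_of_lt hm')

private lemma dom_Wm {f : ℕ →. ℕ} {z : ℕ} (h : (Wm f z).Dom) : ∃ n, enc' n = z := by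
  obtain ⟨hd, -⟩ := Part.bind_dom.mp h
  have := Nat.rfind_spec (Part.get_mem hd)
  rw [Part.mem_some_iff] at this
  exact ⟨_, of_decide_eq_true this.symm⟩

private lemma prefixFree_Wm (f : ℕ →. ℕ) : PrefixFree (Wm f) := by
  intro y z hy hz hp
  obtain ⟨a, ha⟩ := dom_Wm hy
  obtain ⟨b, hb⟩ := dom_Wm hz
  subst ha; subst hb
  exact congrArg enc' (prefix_enc' hp)

private lemma primrec_enc' : Primrec enc' := by
  have hpow : Primrec (Nat.unpaired (· ^ ·)) := Primrec.nat_iff.2 Nat.Primrec.pow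
  have h2 : Primrec fun n => 2 ^ (n+2) :=
    (hpow.comp (Primrec₂.natPair.comp (Primrec.const 2)
      (Primrec.succ.comp Primrec.succ))).of_eq fun n => by simp [Nat.unpaired]
  exact Primrec.nat_sub.comp h2 (Primrec.const 3)

private lemma partrec_Wm {f : ℕ →. ℕ} (hf : Partrec f) : Partrec (Wm f) := by
  have hp : Computable₂ fun (z n : ℕ) => (decide (enc' n = z) : Bool) :=
    (Primrec.eq.comp (primrec_enc'.comp Primrec.snd) Primrec.fst).decide.to_comp
  have hr : Partrec fun z => Nat.rfind fun n => Part.some (decide (enc' n = z)) := by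
    have := Partrec.rfind hp.partrec₂
    exact this.of_eq fun z => by rfl
  have hg : Partrec fun p : ℕ × ℕ => (f p.2).map Nat.succ :=
    (hf.comp Computable.snd).map ((Computable.succ.comp Computable.snd).to₂)
  exact hr.bind hg.to₂

/-- The machine adding a constant to the output of `U`. -/
private def Tm (U : ℕ →. ℕ) (d : ℕ) : ℕ →. ℕ := fun y => (U y).map (· + d)

private lemma partrec_Tm {U : ℕ →. ℕ} (hU : Partrec U) (d : ℕ) : Partrec (Tm U d) :=
  hU.map ((Primrec.nat_add.comp Primrec.snd (Primrec.const d)).to_comp.to₂)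

private lemma dom_Tm {U : ℕ →. ℕ} {d y : ℕ} : (Tm U d y).Dom ↔ (U y).Dom := Iff.rfl

private lemma prefixFree_Tm {U : ℕ →. ℕ} (hU : PrefixFree U) (d : ℕ) :
    PrefixFree (Tm U d) := fun y z hy hz hp =>
  hU y z (dom_Tm.mp hy) (dom_Tm.mp hz) hp

theorem solovay_double_partial (U' : ℕ →. ℕ) (hU' : PrefixOptimal U') :
    ∀ f : ℕ →. ℕ, Partrec f →
      ∃ c, ∀ n m, m ∈ f n →
        solovay (MachineCplx U') (solovay (MachineCplx U') m) ≤
          solovay (MachineCplx U') n + c := by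
  intro f hf
  set K := MachineCplx U' with hK
  -- basic facts about solovay
  have sol_le : ∀ {n i : ℕ}, n < i → solovay K n ≤ K i := fun {n i} h =>
    Nat.sInf_le ⟨i, h, rfl⟩
  have sol_witness : ∀ n, ∃ i, n < i ∧ K i = solovay K n := fun n =>
    Nat.sInf_mem (⟨K (n+1), n+1, Nat.lt_succ_self n, rfl⟩ :
      {m | ∃ i, n < i ∧ K i = m}.Nonempty)
  -- the constant for Wm
  obtain ⟨c1, hc1⟩ := hU'.2.2 (Wm f) (partrec_Wm hf) (prefixFree_Wm f)
  have hKm : ∀ n m, m ∈ f n → K (m+1) ≤ n + 1 + c1 := by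
    intro n m hm
    have := hc1 (m+1) (enc' n) (mem_Wm hm)
    rwa [len_enc'] at this
  -- the constant for Tm
  obtain ⟨c2, hc2⟩ := hU'.2.2 (Tm U' (c1+1)) (partrec_Tm hU'.1 (c1+1))
    (prefixFree_Tm hU'.2.1 (c1+1))
  by_cases hbad : ∀ N, ∃ x, N ≤ x ∧ ¬∃ y, x ∈ U' y
  · -- infinitely many numbers have no program: α ≡ 0
    have hall : ∀ n, solovay K n = 0 := by
      intro n
      obtain ⟨x, hx1, hx2⟩ := hbad (n+1)
      have hKx : K x = 0 := by
        rw [hK]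
        unfold MachineCplx
        convert Nat.sInf_empty
        rw [Set.eq_empty_iff_forall_notMem]
        rintro l ⟨y, -, hy⟩
        exact hx2 ⟨y, hy⟩
      exact Nat.eq_zero_of_le_zero (hKx ▸ sol_le (by omega))
    exact ⟨0, fun n m _ => by rw [hall m, hall 0, hall n]⟩
  · push_neg at hbad
    obtain ⟨N, hN⟩ := hbad
    refine ⟨solovay K N + c2, fun n m hm => ?_⟩
    obtain ⟨i, hi, hKi⟩ := sol_witness (max n N)
    have hiN : N ≤ i := le_of_lt (lt_of_le_of_lt (le_max_right n N) hi)
    have hin : n < i := lt_of_le_of_lt (le_max_left n N) hi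
    obtain ⟨y, hy⟩ := hN i hiN
    -- shortest program for i
    have hwit : ∃ y', len y' = K i ∧ i ∈ U' y' := by
      have : {l | ∃ y', len y' = l ∧ i ∈ U' y'}.Nonempty := ⟨len y, y, rfl, hy⟩
      exact Nat.sInf_mem this
    obtain ⟨y', hy'len, hy'mem⟩ := hwit
    have h1 : solovay K m ≤ n + 1 + c1 :=
      le_trans (sol_le (Nat.lt_succ_self m)) (hKm n m hm)
    have h2 : solovay K m < i + (c1+1) := by omega
    have h3 : i + (c1+1) ∈ Tm U' (c1+1) y' := Part.mem_map _ hy'mem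
    have h4 : K (i + (c1+1)) ≤ solovay K (max n N) + c2 := by
      have := hc2 (i + (c1+1)) y' h3
      rwa [hy'len, hKi] at this
    have h5 : solovay K (solovay K m) ≤ solovay K (max n N) + c2 :=
      le_trans (sol_le h2) h4
    have h6 : solovay K (max n N) ≤ solovay K n + solovay K N := by
      rcases le_total N n with h | h
      · rw [max_eq_left h]; omega
      · rw [max_eq_right h]; omega
    omega
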